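/- Let X ⊆ ℝ^d be compact, N ∈ ℕ, 1 ≤ p < ∞, and let 𝒳 be the set of weighted point sets over X with at most N points. For S ∈ 𝒳 with points {(x_i, w_i)}_{i∈[n]}, let S̃ be the padded point set listing the points of S followed by N − n copies of the pair (x_1, 0) (allowing zero weights). Define β : 𝒳 × 𝒳 → ℝ^{(d+1) × 2N} by stacking, as columns, the N padded (point, weight) pairs of the first argument followed by the N padded pairs of the second. Then for every ε > 0 there exists a continuous function f : Image(β) → ℝ such that |W_p(S_1, S_2) − f(β(S_1, S_2))| < ε for every (S_1, S_2) ∈ 𝒳 × 𝒳. -/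

import Mathlib

/-- A weighted point set: a finite indexed family of points together with weights. -/
structure WPS (Ω : Type*) where
  n : ℕ
  pts : Fin n → Ω
  w : Fin n → ℝ

namespace WPS

/-- The weights are nonnegative and sum to one. -/
def IsWeighted {Ω : Type*} (S : WPS Ω) : Prop :=
  (∀ i, 0 ≤ S.w i) ∧ (∑ i, S.w i) = 1

/-- The `p`-Wasserstein distance between two weighted point sets: the infimum, over
nonnegative coupling matrices `T` with row sums the weights of `P` and column sums the
weights of `Q`, of `(∑ i j, T i j * d(P i, Q j)^p)^(1/p)`. -/
noncomputable def Wp {Ω : Type*} [MetricSpace Ω] (p : ℝ) (P Q : WPS Ω) : ℝ :=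
  sInf { c : ℝ | ∃ T : Fin P.n → Fin Q.n → ℝ,
    (∀ i j, 0 ≤ T i j) ∧
    (∀ i, (∑ j, T i j) = P.w i) ∧
    (∀ j, (∑ i, T i j) = Q.w j) ∧
    c = (∑ i, ∑ j, T i j * dist (P.pts i) (Q.pts j) ^ p) ^ (1 / p) }

end WPS


/-- Padding a weighted point set to exactly `N` (point, weight) pairs: the points of `S`
are listed first, followed by `N − n` copies of the pair `(x₁, 0)` (junk if `S` is
empty). -/
noncomputable def WPS.pad {d : ℕ} (N : ℕ) (S : WPS (EuclideanSpace ℝ (Fin d)))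
    (j : Fin N) : EuclideanSpace ℝ (Fin d) × ℝ :=
  if h : (j : ℕ) < S.n then (S.pts ⟨j, h⟩, S.w ⟨j, h⟩)
  else if h0 : 0 < S.n then (S.pts ⟨0, h0⟩, 0) else (0, 0)

/-- The map `β` stacking, as columns of a `(d+1) × 2N` real matrix, the `N` padded
(point, weight) pairs of the first point set followed by those of the second; each column
is a point of `ℝ^d` together with its weight in the last coordinate. -/
noncomputable def WPS.beta {d : ℕ} (N : ℕ)
    (S₁ S₂ : WPS (EuclideanSpace ℝ (Fin d))) :
    Matrix (Fin (d + 1)) (Fin (2 * N)) ℝ :=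
  fun r c =>
    let col : EuclideanSpace ℝ (Fin d) × ℝ :=
      if h : (c : ℕ) < N then WPS.pad N S₁ ⟨c, h⟩
      else WPS.pad N S₂ ⟨(c : ℕ) - N, by have := c.isLt; omega⟩
    if hr : (r : ℕ) < d then col.1 ⟨r, hr⟩ else col.2

/-- Membership in the space `𝒳` of weighted point sets over `K` with at most `N`
points. -/
def WPS.MemX {d : ℕ} (K : Set (EuclideanSpace ℝ (Fin d))) (N : ℕ)
    (S : WPS (EuclideanSpace ℝ (Fin d))) : Prop :=
  S.IsWeighted ∧ S.n ≤ N ∧ ∀ i, S.pts i ∈ K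

/-! ### Auxiliary development -/

lemma sum_pad {n N : ℕ} (hn : n ≤ N) (g : Fin N → ℝ) (f : Fin n → ℝ)
    (h0 : ∀ (j : Fin N) (h : (j : ℕ) < n), g j = f ⟨j, h⟩)
    (h1 : ∀ j : Fin N, n ≤ (j : ℕ) → g j = 0) :
    ∑ j, g j = ∑ i, f i := by
  rw [← Finset.sum_subset (Finset.subset_univ (Finset.univ.map (Fin.castLEEmb hn)))
    (fun j _ hj => h1 j (by
      by_contra h
      exact hj (Finset.mem_map.mpr ⟨⟨(j : ℕ), by omega⟩, Finset.mem_univ _, Fin.ext rfl⟩)))]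
  rw [Finset.sum_map]
  refine Finset.sum_congr rfl fun i _ => ?_
  rw [h0 _ (by simp)]
  simp

lemma rpow_add_le_add_rpow' {a b q : ℝ} (ha : 0 ≤ a) (hb : 0 ≤ b) (hq0 : 0 ≤ q) (hq1 : q ≤ 1) :
    (a + b) ^ q ≤ a ^ q + b ^ q := by
  have h := NNReal.rpow_add_le_add_rpow (a.toNNReal) (b.toNNReal) hq0 hq1
  have h2 : ((a.toNNReal + b.toNNReal : NNReal) : ℝ) = a + b := by
    push_cast; rw [Real.coe_toNNReal a ha, Real.coe_toNNReal b hb]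
  calc (a+b)^q = (((a.toNNReal + b.toNNReal : NNReal) : ℝ)) ^ q := by rw [h2]
    _ = (((a.toNNReal + b.toNNReal : NNReal) ^ q : NNReal) : ℝ) := by
        rw [NNReal.coe_rpow]
    _ ≤ ((a.toNNReal ^ q + b.toNNReal ^ q : NNReal) : ℝ) := by exact_mod_cast h
    _ = a ^ q + b ^ q := by
        push_cast [NNReal.coe_rpow]
        rw [Real.coe_toNNReal a ha, Real.coe_toNNReal b hb]

namespace WPS

variable {Ω : Type*} [MetricSpace Ω]

/-- The set whose infimum defines `Wp`. -/
def WpSet (p : ℝ) (P Q : WPS Ω) : Set ℝ :=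
  { c : ℝ | ∃ T : Fin P.n → Fin Q.n → ℝ,
    (∀ i j, 0 ≤ T i j) ∧
    (∀ i, (∑ j, T i j) = P.w i) ∧
    (∀ j, (∑ i, T i j) = Q.w j) ∧
    c = (∑ i, ∑ j, T i j * dist (P.pts i) (Q.pts j) ^ p) ^ (1 / p) }

lemma Wp_eq_sInf (p : ℝ) (P Q : WPS Ω) : Wp p P Q = sInf (WpSet p P Q) := rfl

lemma WpSet_nonneg (p : ℝ) (P Q : WPS Ω) : ∀ c ∈ WpSet p P Q, (0:ℝ) ≤ c := by
  rintro c ⟨T, hT0, -, -, rfl⟩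
  refine Real.rpow_nonneg (Finset.sum_nonneg fun i _ => Finset.sum_nonneg fun j _ => ?_) _
  exact mul_nonneg (hT0 i j) (Real.rpow_nonneg dist_nonneg p)

lemma bddBelow_WpSet (p : ℝ) (P Q : WPS Ω) : BddBelow (WpSet p P Q) :=
  ⟨0, fun c hc => WpSet_nonneg p P Q c hc⟩

lemma WpSet_nonempty (p : ℝ) {P Q : WPS Ω} (hP : P.IsWeighted) (hQ : Q.IsWeighted) :
    (WpSet p P Q).Nonempty := by
  refine ⟨_, fun i j => P.w i * Q.w j, fun i j => mul_nonneg (hP.1 i) (hQ.1 j),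
    fun i => ?_, fun j => ?_, rfl⟩
  · rw [← Finset.mul_sum, hQ.2, mul_one]
  · rw [← Finset.sum_mul, hP.2, one_mul]

lemma Wp_nonneg (p : ℝ) {P Q : WPS Ω} (hP : P.IsWeighted) (hQ : Q.IsWeighted) :
    0 ≤ Wp p P Q :=
  le_csInf (WpSet_nonempty p hP hQ) (fun c hc => WpSet_nonneg p P Q c hc)

end WPS

/-! ### Padding -/

variable {d : ℕ}

/-- The padded weighted point set with exactly `N` points. -/
noncomputable def WPS.padWPS (N : ℕ) (S : WPS (EuclideanSpace ℝ (Fin d))) :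
    WPS (EuclideanSpace ℝ (Fin d)) :=
  ⟨N, fun j => (S.pad N j).1, fun j => (S.pad N j).2⟩

lemma WPS.pad_snd (N : ℕ) (S : WPS (EuclideanSpace ℝ (Fin d))) (j : Fin N) :
    (S.pad N j).2 = if h : (j : ℕ) < S.n then S.w ⟨j, h⟩ else 0 := by
  unfold WPS.pad; split_ifs <;> rfl

lemma WPS.pad_fst_lt (N : ℕ) (S : WPS (EuclideanSpace ℝ (Fin d))) (j : Fin N)
    (h : (j : ℕ) < S.n) : (S.pad N j).1 = S.pts ⟨j, h⟩ := by
  unfold WPS.pad; rw [dif_pos h]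

lemma WPS.pad_fst_mem {K : Set (EuclideanSpace ℝ (Fin d))} (N : ℕ)
    {S : WPS (EuclideanSpace ℝ (Fin d))} (hmem : ∀ i, S.pts i ∈ K) (hn : 0 < S.n)
    (j : Fin N) : (S.pad N j).1 ∈ K := by
  unfold WPS.pad
  split_ifs with h
  · exact hmem _
  · exact hmem _

lemma WPS.padWPS_isWeighted {N : ℕ} {S : WPS (EuclideanSpace ℝ (Fin d))}
    (hS : S.IsWeighted) (hn : S.n ≤ N) : (S.padWPS N).IsWeighted := by
  constructor
  · intro j
    change Fin N at j
    rw [show (S.padWPS N).w j = (S.pad N j).2 from rfl, WPS.pad_snd]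
    split_ifs with h
    · exact hS.1 _
    · exact le_rfl
  · rw [← hS.2]
    exact sum_pad hn (fun j => (S.pad N j).2) S.w
      (fun j h => by show (S.pad N j).2 = _; rw [WPS.pad_snd, dif_pos h])
      (fun j h => by show (S.pad N j).2 = 0; rw [WPS.pad_snd, dif_neg (by omega)])

lemma WPS.padw_eq (N : ℕ) (S : WPS (EuclideanSpace ℝ (Fin d))) (j : Fin N) :
    (S.padWPS N).w j = if h : (j : ℕ) < S.n then S.w ⟨j, h⟩ else 0 :=
  WPS.pad_snd N S j

lemma WPS.Wp_pad (p : ℝ) (N : ℕ) (S₁ S₂ : WPS (EuclideanSpace ℝ (Fin d)))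
    (h1 : S₁.n ≤ N) (h2 : S₂.n ≤ N) :
    Wp p (S₁.padWPS N) (S₂.padWPS N) = Wp p S₁ S₂ := by
  rw [WPS.Wp_eq_sInf, WPS.Wp_eq_sInf]
  congr 1
  ext c
  simp only [WPS.WpSet, WPS.padWPS, Set.mem_setOf_eq]
  constructor
  · -- big coupling to small coupling
    rintro ⟨T, hT0, hTr, hTc, rfl⟩
    have hzr : ∀ i : Fin N, S₁.n ≤ (i : ℕ) → ∀ j : Fin N, T i j = 0 := by
      intro i hi j
      have hsum : ∑ j, T i j = 0 := by
        rw [show ∑ j, T i j = (S₁.pad N i).2 from hTr i, WPS.pad_snd, dif_neg (by omega)]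
      exact (Finset.sum_eq_zero_iff_of_nonneg (fun j _ => hT0 i j)).mp hsum j
        (Finset.mem_univ j)
    have hzc : ∀ j : Fin N, S₂.n ≤ (j : ℕ) → ∀ i : Fin N, T i j = 0 := by
      intro j hj i
      have hsum : ∑ i, T i j = 0 := by
        rw [show ∑ i, T i j = (S₂.pad N j).2 from hTc j, WPS.pad_snd, dif_neg (by omega)]
      exact (Finset.sum_eq_zero_iff_of_nonneg (fun i _ => hT0 i j)).mp hsum i
        (Finset.mem_univ i)
    refine ⟨fun i j => T (Fin.castLE h1 i) (Fin.castLE h2 j), fun i j => hT0 _ _,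
      fun i => ?_, fun j => ?_, ?_⟩
    · have hti := hTr (Fin.castLE h1 i)
      rw [WPS.pad_snd, dif_pos (show ((Fin.castLE h1 i : Fin N) : ℕ) < S₁.n from i.isLt)] at hti
      exact ((sum_pad h2 (fun j => T (Fin.castLE h1 i) j)
        (fun j => T (Fin.castLE h1 i) (Fin.castLE h2 j))
        (fun j hj => rfl)
        (fun j hj => hzc j hj _)).symm).trans hti
    · have htj := hTc (Fin.castLE h2 j)
      rw [WPS.pad_snd, dif_pos (show ((Fin.castLE h2 j : Fin N) : ℕ) < S₂.n from j.isLt)] at htj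
      exact ((sum_pad h1 (fun i => T i (Fin.castLE h2 j))
        (fun i => T (Fin.castLE h1 i) (Fin.castLE h2 j))
        (fun i hi => rfl)
        (fun i hi => hzr i hi _)).symm).trans htj
    · congr 1
      refine sum_pad h1 _ _ (fun i hi => ?_) (fun i hi => ?_)
      · refine sum_pad h2 _ _ (fun j hj => ?_) (fun j hj => ?_)
        · show T i j * dist ((S₁.pad N i).1) ((S₂.pad N j).1) ^ p = _
          rw [WPS.pad_fst_lt N S₁ i hi, WPS.pad_fst_lt N S₂ j hj]
          show _ = T (Fin.castLE h1 ⟨(i:ℕ), hi⟩) (Fin.castLE h2 ⟨(j:ℕ), hj⟩) *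
            dist (S₁.pts ⟨(i:ℕ), hi⟩) (S₂.pts ⟨(j:ℕ), hj⟩) ^ p
          congr 2 <;> exact Fin.ext rfl
        · show T i j * _ = 0
          rw [hzc j hj, zero_mul]
      · refine Finset.sum_eq_zero fun j _ => ?_
        show T i j * _ = 0
        rw [hzr i hi, zero_mul]
  · -- small coupling to big coupling
    rintro ⟨T, hT0, hTr, hTc, rfl⟩
    refine ⟨fun i j => if hi : (i : ℕ) < S₁.n then (if hj : (j : ℕ) < S₂.n
        then T ⟨i, hi⟩ ⟨j, hj⟩ else 0) else 0,
      fun i j => by dsimp only; split_ifs <;> [exact hT0 _ _; exact le_rfl; exact le_rfl],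
      fun i => ?_, fun j => ?_, ?_⟩
    · show _ = (S₁.pad N i).2
      rw [WPS.pad_snd]
      split_ifs with hi
      · rw [← hTr ⟨(i:ℕ), hi⟩]
        refine sum_pad h2 _ _ (fun j hj => ?_) (fun j hj => ?_)
        · show dite _ _ _ = _
          rw [dif_pos hi, dif_pos hj]
        · show dite _ _ _ = 0
          rw [dif_pos hi, dif_neg (not_lt.mpr hj)]
      · exact Finset.sum_eq_zero fun j _ => by
          show dite _ _ _ = 0
          rw [dif_neg hi]
    · show _ = (S₂.pad N j).2
      rw [WPS.pad_snd]
      split_ifs with hj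
      · rw [← hTc ⟨(j:ℕ), hj⟩]
        refine sum_pad h1 _ _ (fun i hi => ?_) (fun i hi => ?_)
        · show dite _ _ _ = _
          rw [dif_pos hi, dif_pos hj]
        · show dite _ _ _ = 0
          rw [dif_neg (not_lt.mpr hi)]
      · refine Finset.sum_eq_zero fun i _ => ?_
        show dite _ _ _ = 0
        split_ifs with hi
        · rfl
        · rfl
    · congr 1
      refine (sum_pad h1 _ _ (fun i hi => ?_) (fun i hi => ?_)).symm
      · refine sum_pad h2 _ _ (fun j hj => ?_) (fun j hj => ?_)
        · show dite _ _ _ * dist ((S₁.pad N i).1) ((S₂.pad N j).1) ^ p = _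
          rw [dif_pos hi, dif_pos hj, WPS.pad_fst_lt N S₁ i hi, WPS.pad_fst_lt N S₂ j hj]
        · show dite _ _ _ * _ = 0
          rw [dif_pos hi, dif_neg (not_lt.mpr hj), zero_mul]
      · refine Finset.sum_eq_zero fun j _ => ?_
        show dite _ _ _ * _ = 0
        rw [dif_neg (not_lt.mpr hi), zero_mul]

open Finset in
lemma WPS.Wp_pert {N : ℕ} (p : ℝ) (hp : 1 ≤ p)
    (x x' y y' : Fin N → EuclideanSpace ℝ (Fin d)) (a a' b b' : Fin N → ℝ)
    (ha0 : ∀ i, 0 ≤ a i) (ha1 : ∑ i, a i = 1)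
    (ha0' : ∀ i, 0 ≤ a' i) (ha1' : ∑ i, a' i = 1)
    (hb0 : ∀ i, 0 ≤ b i) (hb1 : ∑ i, b i = 1)
    (hb0' : ∀ i, 0 ≤ b' i) (hb1' : ∑ i, b' i = 1)
    (B η : ℝ) (hB : 0 ≤ B) (hη : 0 ≤ η)
    (hC : ∀ i j, dist (x' i) (y' j) ^ p ≤ dist (x i) (y j) ^ p + η)
    (hCB : ∀ i j, dist (x' i) (y' j) ^ p ≤ B) :
    Wp p ⟨N, x', a'⟩ ⟨N, y', b'⟩ ≤ Wp p ⟨N, x, a⟩ ⟨N, y, b⟩ +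
      (η + B * ((∑ i, |a i - a' i|) + (∑ j, |b j - b' j|))) ^ (1 / p) := by
  have hp0 : (0:ℝ) < p := lt_of_lt_of_le one_pos hp
  set Δ : ℝ := (∑ i, |a i - a' i|) + (∑ j, |b j - b' j|) with hΔ
  have hΔ0 : 0 ≤ Δ :=
    add_nonneg (Finset.sum_nonneg fun i _ => abs_nonneg _)
      (Finset.sum_nonneg fun j _ => abs_nonneg _)
  set e : ℝ := η + B * Δ with he
  have he0 : 0 ≤ e := add_nonneg hη (mul_nonneg hB hΔ0)
  rw [WPS.Wp_eq_sInf p ⟨N, x, a⟩ ⟨N, y, b⟩]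
  have key : ∀ c ∈ WpSet p (⟨N, x, a⟩ : WPS _) ⟨N, y, b⟩,
      Wp p ⟨N, x', a'⟩ ⟨N, y', b'⟩ - e ^ (1/p) ≤ c := by
    rintro c ⟨T, hT0'', hTr'', hTc'', rfl⟩
    have hT0 : ∀ i j : Fin N, 0 ≤ T i j := hT0''
    have hTr : ∀ i : Fin N, (∑ j : Fin N, T i j) = a i := hTr''
    have hTc : ∀ j : Fin N, (∑ i : Fin N, T i j) = b j := hTc''
    clear hT0'' hTr'' hTc''
    show Wp p ⟨N, x', a'⟩ ⟨N, y', b'⟩ - e ^ (1/p)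
      ≤ (∑ i : Fin N, ∑ j : Fin N, T i j * dist (x i) (y j) ^ p) ^ (1/p)
    -- abbreviations
    set C : Fin N → Fin N → ℝ := fun i j => dist (x i) (y j) ^ p with hCdef
    set C' : Fin N → Fin N → ℝ := fun i j => dist (x' i) (y' j) ^ p with hC'def
    have hC'0 : ∀ i j, 0 ≤ C' i j := fun i j => Real.rpow_nonneg dist_nonneg p
    have hC0 : ∀ i j, 0 ≤ C i j := fun i j => Real.rpow_nonneg dist_nonneg p
    set α : Fin N → ℝ := fun i => if a i = 0 then 0 else min 1 (a' i / a i) with hαdef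
    set β : Fin N → ℝ := fun j => if b j = 0 then 0 else min 1 (b' j / b j) with hβdef
    have hα0 : ∀ i, 0 ≤ α i := by
      intro i; simp only [hαdef]
      split_ifs with h
      · exact le_rfl
      · exact le_min zero_le_one (div_nonneg (ha0' i) (ha0 i))
    have hα1 : ∀ i, α i ≤ 1 := by
      intro i; simp only [hαdef]
      split_ifs with h
      · exact zero_le_one
      · exact min_le_left _ _
    have hβ0 : ∀ j, 0 ≤ β j := by
      intro j; simp only [hβdef]
      split_ifs with h
      · exact le_rfl
      · exact le_min zero_le_one (div_nonneg (hb0' j) (hb0 j))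
    have hβ1 : ∀ j, β j ≤ 1 := by
      intro j; simp only [hβdef]
      split_ifs with h
      · exact zero_le_one
      · exact min_le_left _ _
    have hαa : ∀ i, a i * α i = min (a i) (a' i) := by
      intro i; simp only [hαdef]
      split_ifs with h
      · rw [h, zero_mul, min_eq_left (ha0' i)]
      · rw [mul_min_of_nonneg _ _ (ha0 i), mul_one, mul_div_cancel₀ _ h]
    have hβb : ∀ j, b j * β j = min (b j) (b' j) := by
      intro j; simp only [hβdef]
      split_ifs with h
      · rw [h, zero_mul, min_eq_left (hb0' j)]
      · rw [mul_min_of_nonneg _ _ (hb0 j), mul_one, mul_div_cancel₀ _ h]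
    set A : Fin N → Fin N → ℝ := fun i j => T i j * (α i * β j) with hAdef
    have hA0 : ∀ i j, 0 ≤ A i j := fun i j =>
      mul_nonneg (hT0 i j) (mul_nonneg (hα0 i) (hβ0 j))
    have hAT : ∀ i j, A i j ≤ T i j := fun i j => by
      simpa using mul_le_of_le_one_right (hT0 i j)
        (mul_le_one₀ (hα1 i) (hβ0 j) (hβ1 j))
    have hrowA : ∀ i, ∑ j, A i j ≤ min (a i) (a' i) := by
      intro i
      calc ∑ j, A i j ≤ ∑ j, T i j * α i := by
            refine Finset.sum_le_sum fun j _ => ?_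
            show T i j * (α i * β j) ≤ T i j * α i
            exact mul_le_mul_of_nonneg_left
              (mul_le_of_le_one_right (hα0 i) (hβ1 j)) (hT0 i j)
        _ = a i * α i := by rw [← Finset.sum_mul, hTr i]
        _ = min (a i) (a' i) := hαa i
    have hcolA : ∀ j, ∑ i, A i j ≤ min (b j) (b' j) := by
      intro j
      calc ∑ i, A i j ≤ ∑ i, T i j * β j := by
            refine Finset.sum_le_sum fun i _ => ?_
            show T i j * (α i * β j) ≤ T i j * β j
            exact mul_le_mul_of_nonneg_left
              (mul_le_of_le_one_left (hβ0 j) (hα1 i)) (hT0 i j)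
        _ = b j * β j := by rw [← Finset.sum_mul, hTc j]
        _ = min (b j) (b' j) := hβb j
    set r : Fin N → ℝ := fun i => a' i - ∑ j, A i j with hrdef
    set s : Fin N → ℝ := fun j => b' j - ∑ i, A i j with hsdef
    have hr0 : ∀ i, 0 ≤ r i := fun i =>
      sub_nonneg.mpr ((hrowA i).trans (min_le_right _ _))
    have hs0 : ∀ j, 0 ≤ s j := fun j =>
      sub_nonneg.mpr ((hcolA j).trans (min_le_right _ _))
    set m : ℝ := ∑ i, r i with hmdef
    have hm0 : 0 ≤ m := Finset.sum_nonneg fun i _ => hr0 i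
    have hsum_r : m = 1 - ∑ i, ∑ j, A i j := by
      rw [hmdef, hrdef, Finset.sum_sub_distrib, ha1']
    have hsum_s : ∑ j, s j = 1 - ∑ i, ∑ j, A i j := by
      rw [hsdef, Finset.sum_sub_distrib, hb1', Finset.sum_comm]
    have hms : ∑ j, s j = m := by rw [hsum_s, hsum_r]
    set T' : Fin N → Fin N → ℝ := fun i j => A i j + r i * s j / m with hT'def
    have hT'0 : ∀ i j, 0 ≤ T' i j := fun i j =>
      add_nonneg (hA0 i j) (div_nonneg (mul_nonneg (hr0 i) (hs0 j)) hm0)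
    have hT'r : ∀ i, ∑ j, T' i j = a' i := by
      intro i
      show ∑ j, (A i j + r i * s j / m) = a' i
      have hri : a' i - ∑ j, A i j = r i := rfl
      by_cases hm' : m = 0
      · have hrz : r i = 0 :=
          (Finset.sum_eq_zero_iff_of_nonneg (fun i _ => hr0 i)).mp (hmdef ▸ hm') i
            (Finset.mem_univ i)
        simp only [hrz, zero_mul, zero_div, add_zero]
        linarith [hri, hrz]
      · rw [Finset.sum_add_distrib]
        have h2 : ∑ j, r i * s j / m = r i := by
          rw [← Finset.sum_div, ← Finset.mul_sum, hms, mul_div_assoc,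
            div_self hm', mul_one]
        rw [h2]
        linarith [hri]
    have hT'c : ∀ j, ∑ i, T' i j = b' j := by
      intro j
      show ∑ i, (A i j + r i * s j / m) = b' j
      have hsj : b' j - ∑ i, A i j = s j := rfl
      by_cases hm' : m = 0
      · have hsz : s j = 0 := by
          have h0 : ∑ j, s j = 0 := by rw [hms, ← hm']
          exact (Finset.sum_eq_zero_iff_of_nonneg (fun j _ => hs0 j)).mp h0 j
            (Finset.mem_univ j)
        simp only [hsz, mul_zero, zero_div, add_zero]
        linarith [hsj, hsz]
      · rw [Finset.sum_add_distrib]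
        have h2 : ∑ i, r i * s j / m = s j := by
          rw [← Finset.sum_div, ← Finset.sum_mul, ← hmdef, mul_comm, mul_div_assoc,
            div_self hm', mul_one]
        rw [h2]
        linarith [hsj]
    have hTsum : ∑ i : Fin N, ∑ j : Fin N, T i j = 1 := by
      calc ∑ i : Fin N, ∑ j : Fin N, T i j = ∑ i, a i :=
            Finset.sum_congr rfl (fun i _ => hTr i)
        _ = 1 := ha1
    have hmΔ : m ≤ Δ := by
      have h1 : m = ∑ i : Fin N, ∑ j : Fin N, (T i j - A i j) := by
        rw [hsum_r, ← hTsum, ← Finset.sum_sub_distrib]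
        exact Finset.sum_congr rfl fun i _ => by rw [Finset.sum_sub_distrib]
      have h3 : m ≤ ∑ i, ∑ j, T i j * ((1 - α i) + (1 - β j)) := by
        rw [h1]
        refine Finset.sum_le_sum fun i _ => Finset.sum_le_sum fun j _ => ?_
        show T i j - T i j * (α i * β j) ≤ _
        nlinarith [mul_nonneg (mul_nonneg (hT0 i j) (sub_nonneg.mpr (hα1 i)))
          (sub_nonneg.mpr (hβ1 j))]
      have h4 : ∑ i, ∑ j, T i j * ((1 - α i) + (1 - β j))
          = (∑ i, a i * (1 - α i)) + (∑ j, b j * (1 - β j)) := by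
        have hsplit : ∀ i j, T i j * ((1 - α i) + (1 - β j))
            = T i j * (1 - α i) + T i j * (1 - β j) := fun i j => by ring
        calc ∑ i, ∑ j, T i j * ((1 - α i) + (1 - β j))
            = ∑ i, ((∑ j, T i j * (1 - α i)) + ∑ j, T i j * (1 - β j)) := by
              refine Finset.sum_congr rfl fun i _ => ?_
              rw [← Finset.sum_add_distrib]
              exact Finset.sum_congr rfl fun j _ => hsplit i j
          _ = (∑ i, ∑ j, T i j * (1 - α i)) + ∑ i, ∑ j, T i j * (1 - β j) :=
              Finset.sum_add_distrib
          _ = (∑ i, a i * (1 - α i)) + (∑ j, b j * (1 - β j)) := by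
              congr 1
              · refine Finset.sum_congr rfl fun i _ => ?_
                rw [← Finset.sum_mul]
                have : (∑ j, T i j) = a i := hTr i
                rw [this]
              · rw [Finset.sum_comm]
                refine Finset.sum_congr rfl fun j _ => ?_
                rw [← Finset.sum_mul]
                have : (∑ i, T i j) = b j := hTc j
                rw [this]
      have h5 : ∀ i, a i * (1 - α i) ≤ |a i - a' i| := by
        intro i
        have h6 : a i - min (a i) (a' i) ≤ |a i - a' i| := by
          rcases le_total (a i) (a' i) with h | h
          · rw [min_eq_left h]; simp [abs_nonneg]
          · rw [min_eq_right h]; exact le_abs_self _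
        have h7 : a i * (1 - α i) = a i - a i * α i := by ring
        rw [h7, hαa i]
        exact h6
      have h5' : ∀ j, b j * (1 - β j) ≤ |b j - b' j| := by
        intro j
        have h6 : b j - min (b j) (b' j) ≤ |b j - b' j| := by
          rcases le_total (b j) (b' j) with h | h
          · rw [min_eq_left h]; simp [abs_nonneg]
          · rw [min_eq_right h]; exact le_abs_self _
        have h7 : b j * (1 - β j) = b j - b j * β j := by ring
        rw [h7, hβb j]
        exact h6
      calc m ≤ ∑ i, ∑ j, T i j * ((1 - α i) + (1 - β j)) := h3
        _ = (∑ i, a i * (1 - α i)) + (∑ j, b j * (1 - β j)) := h4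
        _ ≤ (∑ i, |a i - a' i|) + (∑ j, |b j - b' j|) :=
            add_le_add (Finset.sum_le_sum fun i _ => h5 i)
              (Finset.sum_le_sum fun j _ => h5' j)
        _ = Δ := hΔ.symm
    -- cost bound
    have hcost : (∑ i, ∑ j, T' i j * C' i j)
        ≤ (∑ i : Fin N, ∑ j : Fin N, T i j * C i j) + e := by
      have hsplit : ∑ i, ∑ j, T' i j * C' i j
          = (∑ i, ∑ j, A i j * C' i j) + ∑ i, ∑ j, r i * s j / m * C' i j := by
        rw [← Finset.sum_add_distrib]
        refine Finset.sum_congr rfl fun i _ => ?_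
        rw [← Finset.sum_add_distrib]
        refine Finset.sum_congr rfl fun j _ => ?_
        show (A i j + r i * s j / m) * C' i j = _
        ring
      have hb1' : (∑ i, ∑ j, A i j * C' i j) ≤ ∑ i : Fin N, ∑ j : Fin N, T i j * C' i j :=
        Finset.sum_le_sum fun i _ => Finset.sum_le_sum fun j _ =>
          mul_le_mul_of_nonneg_right (hAT i j) (hC'0 i j)
      have hb2 : (∑ i : Fin N, ∑ j : Fin N, T i j * C' i j)
          ≤ (∑ i : Fin N, ∑ j : Fin N, T i j * C i j) + η := by
        have : (∑ i : Fin N, ∑ j : Fin N, T i j * C' i j)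
            ≤ ∑ i : Fin N, ∑ j : Fin N, (T i j * C i j + T i j * η) := by
          refine Finset.sum_le_sum fun i _ => Finset.sum_le_sum fun j _ => ?_
          have := hC i j
          nlinarith [hT0 i j, hC i j]
        refine this.trans (le_of_eq ?_)
        have : (∑ i : Fin N, ∑ j : Fin N, (T i j * C i j + T i j * η))
            = (∑ i : Fin N, ∑ j : Fin N, T i j * C i j)
              + (∑ i : Fin N, ∑ j : Fin N, T i j) * η := by
          rw [Finset.sum_mul, ← Finset.sum_add_distrib]
          refine Finset.sum_congr rfl fun i _ => ?_
          rw [Finset.sum_mul, ← Finset.sum_add_distrib]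
        rw [this, hTsum, one_mul]
      have hb3 : (∑ i, ∑ j, r i * s j / m * C' i j) ≤ B * m := by
        have step1 : (∑ i, ∑ j, r i * s j / m * C' i j) ≤ ∑ i, ∑ j, B / m * (r i * s j) := by
          refine Finset.sum_le_sum fun i _ => Finset.sum_le_sum fun j _ => ?_
          have h8 : r i * s j / m * C' i j ≤ r i * s j / m * B :=
            mul_le_mul_of_nonneg_left (hCB i j)
              (div_nonneg (mul_nonneg (hr0 i) (hs0 j)) hm0)
          have h9 : r i * s j / m * B = B / m * (r i * s j) := by ring
          rw [← h9]
          exact h8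
        have step2 : ∑ i, ∑ j, B / m * (r i * s j) = B / m * (m * m) := by
          have : ∑ i, ∑ j, B / m * (r i * s j)
              = B / m * ((∑ i, r i) * (∑ j, s j)) := by
            rw [Finset.sum_mul_sum, Finset.mul_sum]
            refine Finset.sum_congr rfl fun i _ => ?_
            rw [Finset.mul_sum]
          rw [this, ← hmdef, hms]
        by_cases hm' : m = 0
        · refine step1.trans (le_of_eq ?_)
          rw [step2, hm', mul_zero, mul_zero, mul_zero]
        · refine step1.trans (le_of_eq ?_)
          rw [step2]
          field_simp
      have hBm : B * m ≤ B * Δ := mul_le_mul_of_nonneg_left hmΔ hB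
      rw [hsplit, he]
      calc (∑ i : Fin N, ∑ j : Fin N, A i j * C' i j)
            + ∑ i : Fin N, ∑ j : Fin N, r i * s j / m * C' i j
          ≤ ((∑ i : Fin N, ∑ j : Fin N, T i j * C i j) + η) + B * Δ :=
            add_le_add (hb1'.trans hb2) (hb3.trans hBm)
        _ = (∑ i : Fin N, ∑ j : Fin N, T i j * C i j) + (η + B * Δ) := by ring
    -- finish
    have hmem : (∑ i, ∑ j, T' i j * C' i j) ^ (1/p)
        ∈ WpSet p (⟨N, x', a'⟩ : WPS _) ⟨N, y', b'⟩ :=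
      ⟨T', hT'0, hT'r, hT'c, rfl⟩
    have hWle : Wp p ⟨N, x', a'⟩ ⟨N, y', b'⟩ ≤ (∑ i, ∑ j, T' i j * C' i j) ^ (1/p) :=
      csInf_le (WPS.bddBelow_WpSet p _ _) hmem
    have hcost0 : 0 ≤ ∑ i, ∑ j, T' i j * C' i j :=
      Finset.sum_nonneg fun i _ => Finset.sum_nonneg fun j _ =>
        mul_nonneg (hT'0 i j) (hC'0 i j)
    have hTC0 : 0 ≤ ∑ i : Fin N, ∑ j : Fin N, T i j * C i j :=
      Finset.sum_nonneg fun i _ => Finset.sum_nonneg fun j _ =>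
        mul_nonneg (hT0 i j) (hC0 i j)
    have hq0 : (0:ℝ) ≤ 1/p := by positivity
    have hq1 : (1:ℝ)/p ≤ 1 := by
      rw [div_le_one hp0]
      exact hp
    have hchain : Wp p ⟨N, x', a'⟩ ⟨N, y', b'⟩
        ≤ (∑ i : Fin N, ∑ j : Fin N, T i j * C i j) ^ (1/p) + e ^ (1/p) := by
      calc Wp p ⟨N, x', a'⟩ ⟨N, y', b'⟩
          ≤ (∑ i, ∑ j, T' i j * C' i j) ^ (1/p) := hWle
        _ ≤ ((∑ i : Fin N, ∑ j : Fin N, T i j * C i j) + e) ^ (1/p) :=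
            Real.rpow_le_rpow hcost0 hcost hq0
        _ ≤ (∑ i : Fin N, ∑ j : Fin N, T i j * C i j) ^ (1/p) + e ^ (1/p) :=
            rpow_add_le_add_rpow' hTC0 he0 hq0 hq1
    linarith [hchain]
  have hfin := le_csInf (WPS.WpSet_nonempty p (P := ⟨N, x, a⟩) (Q := ⟨N, y, b⟩)
    ⟨ha0, ha1⟩ ⟨hb0, hb1⟩) key
  linarith [hfin]

section Continuity

lemma dist_fst_le' {α β : Type*} [PseudoMetricSpace α] [PseudoMetricSpace β] (p q : α × β) :
    dist p.1 q.1 ≤ dist p q := by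
  rw [Prod.dist_eq]; exact le_max_left _ _

lemma dist_snd_le' {α β : Type*} [PseudoMetricSpace α] [PseudoMetricSpace β] (p q : α × β) :
    dist p.2 q.2 ≤ dist p q := by
  rw [Prod.dist_eq]; exact le_max_right _ _

variable {d : ℕ}

/-- The Wasserstein distance as a function of the raw `N`-point data. -/
noncomputable def WPS.G (N : ℕ) (p : ℝ)
    (z : (Fin N → EuclideanSpace ℝ (Fin d)) × (Fin N → ℝ)
      × (Fin N → EuclideanSpace ℝ (Fin d)) × (Fin N → ℝ)) : ℝ :=
  Wp p ⟨N, z.1, z.2.1⟩ ⟨N, z.2.2.1, z.2.2.2⟩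

/-- The domain of nice data. -/
def WPS.D (K : Set (EuclideanSpace ℝ (Fin d))) (N : ℕ) :
    Set ((Fin N → EuclideanSpace ℝ (Fin d)) × (Fin N → ℝ)
      × (Fin N → EuclideanSpace ℝ (Fin d)) × (Fin N → ℝ)) :=
  {z | (∀ j, z.1 j ∈ K) ∧ (∀ i, 0 ≤ z.2.1 i) ∧ (∑ i, z.2.1 i) = 1
    ∧ (∀ j, z.2.2.1 j ∈ K) ∧ (∀ i, 0 ≤ z.2.2.2 i) ∧ (∑ i, z.2.2.2 i) = 1}

lemma WPS.G_contOn (N : ℕ) (p : ℝ) (hp : 1 ≤ p) {K : Set (EuclideanSpace ℝ (Fin d))}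
    (hK : IsCompact K) : ContinuousOn (WPS.G N p) (WPS.D K N) := by
  have hp0 : (0:ℝ) < p := lt_of_lt_of_le one_pos hp
  have hφ : Continuous fun t : ℝ => t ^ p := by
    rw [continuous_iff_continuousAt]
    intro t
    exact Real.continuousAt_rpow_const t p (Or.inr hp0.le)
  set ψ : EuclideanSpace ℝ (Fin d) × EuclideanSpace ℝ (Fin d) → ℝ :=
    fun uv => dist uv.1 uv.2 ^ p with hψdef
  have hψ : Continuous ψ := hφ.comp continuous_dist
  obtain ⟨B0, hB0⟩ := (hK.prod hK).exists_bound_of_continuousOn hψ.continuousOn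
  set B := |B0| with hBdef
  have hB : 0 ≤ B := abs_nonneg _
  have hBb : ∀ u ∈ K, ∀ v ∈ K, dist u v ^ p ≤ B := by
    intro u hu v hv
    have h1 := hB0 (u, v) (Set.mk_mem_prod hu hv)
    calc dist u v ^ p ≤ |dist u v ^ p| := le_abs_self _
      _ = ‖ψ (u, v)‖ := rfl
      _ ≤ B0 := h1
      _ ≤ B := le_abs_self _
  have hUC := (hK.prod hK).uniformContinuousOn_of_continuous hψ.continuousOn
  rw [Metric.uniformContinuousOn_iff] at hUC
  intro z hz
  rw [Metric.continuousWithinAt_iff]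
  intro ε hε
  have hεp : 0 < ε ^ p := Real.rpow_pos_of_pos hε p
  obtain ⟨δ₁, hδ₁0, hδ₁⟩ := hUC (ε ^ p / 2) (by positivity)
  refine ⟨min δ₁ (ε ^ p / (8 * (B + 1) * (N + 1))), lt_min hδ₁0 (by positivity), ?_⟩
  intro z' hz' hdist
  obtain ⟨hzK, hza0, hza1, hzyK, hzb0, hzb1⟩ := hz
  obtain ⟨hzK', hza0', hza1', hzyK', hzb0', hzb1'⟩ := hz'
  -- entrywise bounds
  have hdδ₁ : dist z' z < δ₁ := lt_of_lt_of_le hdist (min_le_left _ _)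
  have hdδ₂ : dist z' z < ε ^ p / (8 * (B + 1) * (N + 1)) :=
    lt_of_lt_of_le hdist (min_le_right _ _)
  have hd0 : 0 ≤ dist z' z := dist_nonneg
  -- distances of the four components
  have hdx : ∀ i, dist (z'.1 i) (z.1 i) ≤ dist z' z := fun i =>
    (dist_le_pi_dist _ _ i).trans (dist_fst_le' _ _)
  have hda : ∀ i, dist (z'.2.1 i) (z.2.1 i) ≤ dist z' z := fun i =>
    (dist_le_pi_dist _ _ i).trans ((dist_fst_le' _ _).trans ((dist_snd_le' z' z)))
  have hdy : ∀ i, dist (z'.2.2.1 i) (z.2.2.1 i) ≤ dist z' z := fun i =>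
    (dist_le_pi_dist _ _ i).trans
      (((dist_fst_le' _ _).trans (dist_snd_le' _ _)).trans (dist_snd_le' z' z))
  have hdb : ∀ i, dist (z'.2.2.2 i) (z.2.2.2 i) ≤ dist z' z := fun i =>
    (dist_le_pi_dist _ _ i).trans
      (((dist_snd_le' _ _).trans (dist_snd_le' _ _)).trans (dist_snd_le' z' z))
  -- cost matrices are uniformly close
  have hCclose : ∀ i j, |dist (z'.1 i) (z'.2.2.1 j) ^ p - dist (z.1 i) (z.2.2.1 j) ^ p|
      < ε ^ p / 2 := by
    intro i j
    have hmem1 : (z'.1 i, z'.2.2.1 j) ∈ K ×ˢ K := Set.mk_mem_prod (hzK' i) (hzyK' j)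
    have hmem2 : (z.1 i, z.2.2.1 j) ∈ K ×ˢ K := Set.mk_mem_prod (hzK i) (hzyK j)
    have hpair : dist (z'.1 i, z'.2.2.1 j) (z.1 i, z.2.2.1 j) < δ₁ := by
      rw [Prod.dist_eq]
      exact max_lt (lt_of_le_of_lt (hdx i) hdδ₁) (lt_of_le_of_lt (hdy j) hdδ₁)
    have := hδ₁ _ hmem1 _ hmem2 hpair
    rwa [Real.dist_eq] at this
  -- weight sums are close
  have hasum : (∑ i, |z.2.1 i - z'.2.1 i|) ≤ N * dist z' z := by
    calc (∑ i, |z.2.1 i - z'.2.1 i|) ≤ ∑ _i : Fin N, dist z' z := by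
          refine Finset.sum_le_sum fun i _ => ?_
          rw [abs_sub_comm, ← Real.dist_eq]
          exact hda i
      _ = N * dist z' z := by rw [Finset.sum_const]; simp [mul_comm]
  have hbsum : (∑ j, |z.2.2.2 j - z'.2.2.2 j|) ≤ N * dist z' z := by
    calc (∑ j, |z.2.2.2 j - z'.2.2.2 j|) ≤ ∑ _j : Fin N, dist z' z := by
          refine Finset.sum_le_sum fun j _ => ?_
          rw [abs_sub_comm, ← Real.dist_eq]
          exact hdb j
      _ = N * dist z' z := by rw [Finset.sum_const]; simp [mul_comm]
  -- the error bound
  have hsmall : ∀ Sd : ℝ, 0 ≤ Sd → Sd ≤ 2 * N * dist z' z →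
      ε ^ p / 2 + B * Sd < ε ^ p := by
    intro Sd hS0 hSd
    have h1 : B * Sd ≤ B * (2 * N * dist z' z) :=
      mul_le_mul_of_nonneg_left hSd hB
    have h2 : B * (2 * N * dist z' z) < ε ^ p / 2 := by
      have hN0 : (0:ℝ) ≤ N := Nat.cast_nonneg N
      have hco : (0:ℝ) < (B + 1) * (2 * ((N:ℝ) + 1)) := by positivity
      have hkey : (B + 1) * (2 * ((N:ℝ) + 1)) * dist z' z
          < (B + 1) * (2 * ((N:ℝ) + 1)) * (ε ^ p / (8 * (B + 1) * (N + 1))) :=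
        mul_lt_mul_of_pos_left hdδ₂ hco
      have heq : (B + 1) * (2 * ((N:ℝ) + 1)) * (ε ^ p / (8 * (B + 1) * (N + 1)))
          = ε ^ p / 4 := by
        field_simp
        ring
      have hmono : B * (2 * N * dist z' z) ≤ (B + 1) * (2 * ((N:ℝ) + 1)) * dist z' z := by
        nlinarith [mul_nonneg (mul_nonneg hB hN0) hd0, mul_nonneg hB hd0,
          mul_nonneg hN0 hd0, hd0]
      linarith
    linarith
  set Sd : ℝ := (∑ i, |z.2.1 i - z'.2.1 i|) + (∑ j, |z.2.2.2 j - z'.2.2.2 j|) with hSddef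
  have hSd0 : 0 ≤ Sd :=
    add_nonneg (Finset.sum_nonneg fun i _ => abs_nonneg _)
      (Finset.sum_nonneg fun j _ => abs_nonneg _)
  have hSdle : Sd ≤ 2 * N * dist z' z := by
    rw [hSddef]
    have := hasum
    have := hbsum
    linarith
  have he_lt : ε ^ p / 2 + B * Sd < ε ^ p := hsmall Sd hSd0 hSdle
  have hη0 : (0:ℝ) ≤ ε ^ p / 2 := by positivity
  have hC1 : ∀ i j, dist (z'.1 i) (z'.2.2.1 j) ^ p
      ≤ dist (z.1 i) (z.2.2.1 j) ^ p + ε ^ p / 2 := by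
    intro i j
    have := hCclose i j
    rw [abs_sub_lt_iff] at this
    linarith [this.1]
  have hC2 : ∀ i j, dist (z.1 i) (z.2.2.1 j) ^ p
      ≤ dist (z'.1 i) (z'.2.2.1 j) ^ p + ε ^ p / 2 := by
    intro i j
    have := hCclose i j
    rw [abs_sub_lt_iff] at this
    linarith [this.2]
  have hCB1 : ∀ i j, dist (z'.1 i) (z'.2.2.1 j) ^ p ≤ B :=
    fun i j => hBb _ (hzK' i) _ (hzyK' j)
  have hCB2 : ∀ i j, dist (z.1 i) (z.2.2.1 j) ^ p ≤ B :=
    fun i j => hBb _ (hzK i) _ (hzyK j)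
  have hup : WPS.G N p z' ≤ WPS.G N p z + (ε ^ p / 2 + B * Sd) ^ (1/p) :=
    WPS.Wp_pert p hp z.1 z'.1 z.2.2.1 z'.2.2.1 z.2.1 z'.2.1 z.2.2.2 z'.2.2.2
      hza0 hza1 hza0' hza1' hzb0 hzb1 hzb0' hzb1' B (ε ^ p / 2) hB hη0 hC1 hCB1
  have hSdsymm : ((∑ i, |z'.2.1 i - z.2.1 i|) + (∑ j, |z'.2.2.2 j - z.2.2.2 j|)) = Sd := by
    rw [hSddef]
    congr 1 <;> exact Finset.sum_congr rfl (fun i _ => abs_sub_comm _ _)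
  have hdown : WPS.G N p z ≤ WPS.G N p z' + (ε ^ p / 2 + B * Sd) ^ (1/p) := by
    have h := WPS.Wp_pert p hp z'.1 z.1 z'.2.2.1 z.2.2.1 z'.2.1 z.2.1 z'.2.2.2 z.2.2.2
      hza0' hza1' hza0 hza1 hzb0' hzb1' hzb0 hzb1 B (ε ^ p / 2) hB hη0 hC2 hCB2
    rwa [hSdsymm] at h
  have hlt : (ε ^ p / 2 + B * Sd) ^ (1/p) < ε := by
    have h1 : (ε ^ p / 2 + B * Sd) ^ (1/p) < (ε ^ p) ^ (1/p) :=
      Real.rpow_lt_rpow (add_nonneg hη0 (mul_nonneg hB hSd0)) he_lt (by positivity)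
    have h2 : (ε ^ p) ^ ((1:ℝ)/p) = ε := by
      rw [← Real.rpow_mul hε.le, mul_one_div_cancel hp0.ne', Real.rpow_one]
    linarith
  rw [Real.dist_eq, abs_sub_lt_iff]
  constructor <;> linarith

end Continuity
section Recon

variable {d : ℕ}

/-- Reconstructing the padded data from the matrix `β(S₁, S₂)`. -/
noncomputable def WPS.reconZ (d N : ℕ) (M : Matrix (Fin (d + 1)) (Fin (2 * N)) ℝ) :
    (Fin N → EuclideanSpace ℝ (Fin d)) × (Fin N → ℝ)
      × (Fin N → EuclideanSpace ℝ (Fin d)) × (Fin N → ℝ) :=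
  (fun j => (EuclideanSpace.equiv (Fin d) ℝ).symm
      (fun i => M ⟨i, by have := i.isLt; omega⟩ ⟨j, by have := j.isLt; omega⟩),
   fun j => M ⟨d, by omega⟩ ⟨j, by have := j.isLt; omega⟩,
   fun j => (EuclideanSpace.equiv (Fin d) ℝ).symm
      (fun i => M ⟨i, by have := i.isLt; omega⟩ ⟨N + j, by have := j.isLt; omega⟩),
   fun j => M ⟨d, by omega⟩ ⟨N + j, by have := j.isLt; omega⟩)

lemma WPS.reconZ_continuous (d N : ℕ) : Continuous (WPS.reconZ d N) := by
  have hentry : ∀ (r : Fin (d + 1)) (c : Fin (2 * N)),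
      Continuous fun M : Matrix (Fin (d + 1)) (Fin (2 * N)) ℝ => M r c :=
    fun r c => (continuous_apply c).comp (continuous_apply r)
  refine Continuous.prodMk ?_ (Continuous.prodMk ?_ (Continuous.prodMk ?_ ?_))
  · exact continuous_pi fun j =>
      (EuclideanSpace.equiv (Fin d) ℝ).symm.continuous.comp
        (continuous_pi fun i => hentry _ _)
  · exact continuous_pi fun j => hentry _ _
  · exact continuous_pi fun j =>
      (EuclideanSpace.equiv (Fin d) ℝ).symm.continuous.comp
        (continuous_pi fun i => hentry _ _)
  · exact continuous_pi fun j => hentry _ _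

lemma WPS.beta_pt1 (N : ℕ) (S₁ S₂ : WPS (EuclideanSpace ℝ (Fin d)))
    (r : Fin (d + 1)) (hr : (r : ℕ) < d) (c : Fin (2 * N)) (hc : (c : ℕ) < N) :
    WPS.beta N S₁ S₂ r c = (S₁.pad N ⟨c, hc⟩).1 ⟨r, hr⟩ := by
  unfold WPS.beta
  simp only [dif_pos hc, dif_pos hr]

lemma WPS.beta_pt2 (N : ℕ) (S₁ S₂ : WPS (EuclideanSpace ℝ (Fin d)))
    (r : Fin (d + 1)) (hr : (r : ℕ) < d) (c : Fin (2 * N)) (hc : ¬ (c : ℕ) < N) :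
    WPS.beta N S₁ S₂ r c
      = (S₂.pad N ⟨(c : ℕ) - N, by have := c.isLt; omega⟩).1 ⟨r, hr⟩ := by
  unfold WPS.beta
  simp only [dif_neg hc, dif_pos hr]

lemma WPS.beta_w1 (N : ℕ) (S₁ S₂ : WPS (EuclideanSpace ℝ (Fin d)))
    (r : Fin (d + 1)) (hr : ¬ (r : ℕ) < d) (c : Fin (2 * N)) (hc : (c : ℕ) < N) :
    WPS.beta N S₁ S₂ r c = (S₁.pad N ⟨c, hc⟩).2 := by
  unfold WPS.beta
  simp only [dif_pos hc, dif_neg hr]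

lemma WPS.beta_w2 (N : ℕ) (S₁ S₂ : WPS (EuclideanSpace ℝ (Fin d)))
    (r : Fin (d + 1)) (hr : ¬ (r : ℕ) < d) (c : Fin (2 * N)) (hc : ¬ (c : ℕ) < N) :
    WPS.beta N S₁ S₂ r c
      = (S₂.pad N ⟨(c : ℕ) - N, by have := c.isLt; omega⟩).2 := by
  unfold WPS.beta
  simp only [dif_neg hc, dif_neg hr]

lemma WPS.reconZ_beta (N : ℕ) (S₁ S₂ : WPS (EuclideanSpace ℝ (Fin d))) :
    WPS.reconZ d N (WPS.beta N S₁ S₂)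
      = (fun j => (S₁.pad N j).1, fun j => (S₁.pad N j).2,
         fun j => (S₂.pad N j).1, fun j => (S₂.pad N j).2) := by
  have hd : ¬ ((⟨d, by omega⟩ : Fin (d + 1)) : ℕ) < d := by simp
  refine Prod.ext ?_ (Prod.ext ?_ (Prod.ext ?_ ?_))
  · funext j
    refine PiLp.ext fun i => ?_
    show WPS.beta N S₁ S₂ ⟨i, _⟩ ⟨j, _⟩ = (S₁.pad N j).1 i
    rw [WPS.beta_pt1 N S₁ S₂ _ (show ((i:ℕ)) < d from i.isLt) _
      (show ((j:ℕ)) < N from j.isLt)]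
  · funext j
    show WPS.beta N S₁ S₂ ⟨d, _⟩ ⟨j, _⟩ = (S₁.pad N j).2
    rw [WPS.beta_w1 N S₁ S₂ _ hd _ (show ((j:ℕ)) < N from j.isLt)]
  · funext j
    refine PiLp.ext fun i => ?_
    show WPS.beta N S₁ S₂ ⟨i, _⟩ ⟨N + j, _⟩ = (S₂.pad N j).1 i
    rw [WPS.beta_pt2 N S₁ S₂ _ (show ((i:ℕ)) < d from i.isLt) _
      (show ¬ N + (j:ℕ) < N by omega)]
    have hj2 : (⟨N + (j:ℕ) - N, by omega⟩ : Fin N) = j :=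
      Fin.ext (show N + (j:ℕ) - N = (j:ℕ) by omega)
    show (S₂.pad N ⟨N + (j:ℕ) - N, by omega⟩).1 i = (S₂.pad N j).1 i
    rw [hj2]
  · funext j
    show WPS.beta N S₁ S₂ ⟨d, _⟩ ⟨N + j, _⟩ = (S₂.pad N j).2
    rw [WPS.beta_w2 N S₁ S₂ _ hd _ (show ¬ N + (j:ℕ) < N by omega)]
    have hj2 : (⟨N + (j:ℕ) - N, by omega⟩ : Fin N) = j :=
      Fin.ext (show N + (j:ℕ) - N = (j:ℕ) by omega)
    show (S₂.pad N ⟨N + (j:ℕ) - N, by omega⟩).2 = (S₂.pad N j).2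
    rw [hj2]

end Recon

lemma WPS.pos_of_memX {d : ℕ} {K : Set (EuclideanSpace ℝ (Fin d))} {N : ℕ}
    {S : WPS (EuclideanSpace ℝ (Fin d))} (h : S.MemX K N) : 0 < S.n := by
  rcases Nat.eq_zero_or_pos S.n with h0 | h0
  · exfalso
    have hw1 := h.1.2
    have : IsEmpty (Fin S.n) := by rw [h0]; infer_instance
    rw [Finset.univ_eq_empty, Finset.sum_empty] at hw1
    norm_num at hw1
  · exact h0

/-- Lemma B.1 of the paper.  Let `K ⊆ ℝ^d` be compact, `N ∈ ℕ`,
`1 ≤ p < ∞`, and let `𝒳` be the weighted point sets over `K` with at most `N` points.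
With `β : 𝒳 × 𝒳 → ℝ^{(d+1)×2N}` as above, for every `ε > 0` there is a continuous
function `f` on `Image(β)` such that `|W_p(S₁, S₂) − f(β(S₁, S₂))| < ε` for every
`(S₁, S₂) ∈ 𝒳 × 𝒳`. -/
theorem wasserstein_mlp_approximation
    (d N : ℕ) (p : ℝ) (hp : 1 ≤ p)
    (K : Set (EuclideanSpace ℝ (Fin d))) (hK : IsCompact K)
    (ε : ℝ) (hε : 0 < ε) :
    ∃ f : Matrix (Fin (d + 1)) (Fin (2 * N)) ℝ → ℝ,
      ContinuousOn f
        {M | ∃ S₁ S₂ : WPS (EuclideanSpace ℝ (Fin d)),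
          WPS.MemX K N S₁ ∧ WPS.MemX K N S₂ ∧ M = WPS.beta N S₁ S₂} ∧
      ∀ S₁ S₂ : WPS (EuclideanSpace ℝ (Fin d)),
        WPS.MemX K N S₁ → WPS.MemX K N S₂ →
        |WPS.Wp p S₁ S₂ - f (WPS.beta N S₁ S₂)| < ε := by
  refine ⟨fun M => WPS.G N p (WPS.reconZ d N M), ?_, ?_⟩
  · refine (WPS.G_contOn N p hp hK).comp
      (WPS.reconZ_continuous d N).continuousOn ?_
    rintro M ⟨S₁, S₂, h₁, h₂, rfl⟩
    rw [WPS.reconZ_beta]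
    have hW₁ := WPS.padWPS_isWeighted h₁.1 h₁.2.1
    have hW₂ := WPS.padWPS_isWeighted h₂.1 h₂.2.1
    exact ⟨fun j => WPS.pad_fst_mem N h₁.2.2 (WPS.pos_of_memX h₁) j,
      hW₁.1, hW₁.2,
      fun j => WPS.pad_fst_mem N h₂.2.2 (WPS.pos_of_memX h₂) j,
      hW₂.1, hW₂.2⟩
  · intro S₁ S₂ h₁ h₂
    show |WPS.Wp p S₁ S₂ - WPS.G N p (WPS.reconZ d N (WPS.beta N S₁ S₂))| < ε
    have hG : WPS.G N p (WPS.reconZ d N (WPS.beta N S₁ S₂)) = WPS.Wp p S₁ S₂ := by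
      rw [WPS.reconZ_beta]
      show WPS.Wp p (S₁.padWPS N) (S₂.padWPS N) = _
      exact WPS.Wp_pad p N S₁ S₂ h₁.2.1 h₂.2.1
    rw [hG, sub_self, abs_zero]
    exact hε
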